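/- Let k ≥ 2, ρ = −diag(e^{−πi/k},…,e^{−(k−1)πi/k}), Γᵢ = ρⁱ(1,…,1)ᵀ, Πᵢ = (1−ρ)Γᵢ. Then Γ₀ = Σ_{i=0}^{k−2} ((k−1−i)/k)·(Π_{2i} + Π_{2i+1}). -/

import Mathlib

/-- The explicit identity `Γ₀ = Σ_{i=0}^{k-2} ((k-1-i)/k)(Π_{2i} + Π_{2i+1})`,
where `Γᵢ = ρⁱ(1,…,1)ᵀ`, `Πᵢ = (1-ρ)Γᵢ` and
`ρ = -diag(e^{-πi/k},…,e^{-(k-1)πi/k})`. -/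
theorem stmt_9 (k : ℕ) (hk : 2 ≤ k)
    (ρ : Matrix (Fin (k-1)) (Fin (k-1)) ℂ)
    (hρ : ρ = Matrix.diagonal (fun j : Fin (k-1) =>
      -Complex.exp (-(Real.pi : ℂ) * Complex.I * (((j : ℕ) : ℂ) + 1) / (k : ℂ))))
    (Γ : ℕ → Fin (k-1) → ℂ)
    (hΓ : ∀ i, Γ i = (ρ ^ i).mulVec (fun _ => 1))
    (Pv : ℕ → Fin (k-1) → ℂ)
    (hPv : ∀ i, Pv i = (1 - ρ).mulVec (Γ i)) :
    Γ 0 = ∑ i ∈ Finset.range (k - 1),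
      ((((k : ℂ) - 1 - (i : ℂ)) / (k : ℂ)) • (Pv (2 * i) + Pv (2 * i + 1))) := by
  have hkC : (k : ℂ) ≠ 0 := by
    exact_mod_cast (Nat.cast_ne_zero (R := ℂ)).mpr (by omega)
  funext j
  set X : ℂ := -(Real.pi : ℂ) * Complex.I * (((j : ℕ) : ℂ) + 1) / (k : ℂ) with hX
  set e : ℂ := Complex.exp X with he
  have hΓj : ∀ i, Γ i j = (-e) ^ i := by
    intro i
    rw [hΓ, hρ, Matrix.diagonal_pow, Matrix.mulVec_diagonal, mul_one]
    simp [Pi.pow_apply, he, hX]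
  have hPj : ∀ i, Pv i j = (-e) ^ i - (-e) ^ (i+1) := by
    intro i
    rw [hPv, Matrix.sub_mulVec, Matrix.one_mulVec, Pi.sub_apply, hρ,
      Matrix.mulVec_diagonal, hΓj i, pow_succ]
    ring
  set q : ℂ := e ^ 2 with hq
  have hsum : (∑ i ∈ Finset.range (k - 1),
      ((((k : ℂ) - 1 - (i : ℂ)) / (k : ℂ)) • (Pv (2 * i) + Pv (2 * i + 1)))) j
      = ∑ i ∈ Finset.range (k - 1),
      (((k : ℂ) - 1 - (i : ℂ)) / (k : ℂ)) * (q ^ i - q ^ (i+1)) := by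
    rw [Finset.sum_apply]
    refine Finset.sum_congr rfl (fun i _ => ?_)
    rw [Pi.smul_apply, Pi.add_apply, hPj, hPj, smul_eq_mul]
    have h1 : (-e) ^ (2*i) = q ^ i := by rw [pow_mul, neg_sq, hq, ← pow_mul]
    have h2 : (-e) ^ (2*i+1+1) = q ^ (i+1) := by
      rw [show 2*i+1+1 = 2*(i+1) by ring, pow_mul, neg_sq, hq, ← pow_mul]
    rw [h1, h2]
    ring
  rw [hsum, hΓj]
  have hπ : (Real.pi : ℂ) ≠ 0 := by exact_mod_cast Real.pi_ne_zero
  have hqk : q ^ k = 1 := by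
    rw [hq, he, ← pow_mul, ← Complex.exp_nat_mul]
    have h2 : ((2 * k : ℕ) : ℂ) * X = ((-((j:ℕ):ℤ)-1 : ℤ) : ℂ) * (2 * Real.pi * Complex.I) := by
      rw [hX]; push_cast; field_simp; ring
    rw [h2, Complex.exp_int_mul_two_pi_mul_I]
  have hq1 : q ≠ 1 := by
    rw [hq, he, ← Complex.exp_nat_mul]
    intro hone
    rw [Complex.exp_eq_one_iff] at hone
    obtain ⟨n, hn⟩ := hone
    rw [hX] at hn
    have hne : (2 * (Real.pi:ℂ) * Complex.I) ≠ 0 := by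
      simp [hπ, Complex.I_ne_zero]
    have hkey : (((j:ℕ):ℂ) + 1) * (2 * (Real.pi:ℂ) * Complex.I)
        = ((-n : ℤ) : ℂ) * k * (2 * (Real.pi:ℂ) * Complex.I) := by
      push_cast
      push_cast at hn
      field_simp at hn
      linear_combination (-2 * (Real.pi:ℂ) * Complex.I) * hn
    have hkey2 : (((j:ℕ):ℂ) + 1) = ((-n : ℤ) : ℂ) * k := mul_right_cancel₀ hne hkey
    have hkeyZ : (((j:ℕ)):ℤ) + 1 = (-n) * (k:ℤ) := by exact_mod_cast hkey2
    have hjlt : (j:ℕ) + 1 < k := by have := j.isLt; omega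
    have hjZ : (((j:ℕ)):ℤ) + 1 < (k:ℤ) := by exact_mod_cast hjlt
    have hkZ : (2:ℤ) ≤ (k:ℤ) := by exact_mod_cast hk
    rcases le_or_gt (-n) 0 with h | h
    · nlinarith
    · have h1 : (1:ℤ) ≤ -n := h
      nlinarith
  have hgeom : ∑ i ∈ Finset.range k, q ^ i = 0 := by
    rw [geom_sum_eq hq1, hqk]
    simp
  have hk2 : k - 1 + 1 = k := by omega
  have hshift : ∑ i ∈ Finset.range (k-1), q ^ (i+1) = -1 := by
    have h := Finset.sum_range_succ' (fun i => q ^ i) (k-1)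
    rw [hk2, hgeom] at h
    simp at h; linear_combination -h
  have htel : ∑ i ∈ Finset.range (k-1),
      ((((k:ℂ) - 1 - (i:ℂ)) * q ^ i - ((k:ℂ) - 1 - ((i+1:ℕ):ℂ)) * q ^ (i+1)))
      = ((k:ℂ) - 1 - ((0:ℕ):ℂ)) * q ^ 0 - ((k:ℂ) - 1 - ((k-1:ℕ):ℂ)) * q ^ (k-1) :=
    Finset.sum_range_sub' (fun i => ((k:ℂ) - 1 - ((i:ℕ):ℂ)) * q ^ i) (k-1)
  have hcast : ((k-1:ℕ):ℂ) = (k:ℂ) - 1 := by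
    push_cast [Nat.cast_sub (by omega : 1 ≤ k)]; ring
  calc (-e) ^ 0 = (1/(k:ℂ)) * (((k:ℂ) - 1 - ((0:ℕ):ℂ)) * q ^ 0
          - ((k:ℂ) - 1 - ((k-1:ℕ):ℂ)) * q ^ (k-1) - (-1)) := by
        rw [hcast, pow_zero]; field_simp
        rw [Nat.cast_zero]; ring
    _ = (1/(k:ℂ)) * (∑ i ∈ Finset.range (k-1),
          ((((k:ℂ) - 1 - (i:ℂ)) * q ^ i - ((k:ℂ) - 1 - ((i+1:ℕ):ℂ)) * q ^ (i+1)))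
          - ∑ i ∈ Finset.range (k-1), q ^ (i+1)) := by rw [htel, hshift]
    _ = ∑ i ∈ Finset.range (k - 1),
      (((k : ℂ) - 1 - (i : ℂ)) / (k : ℂ)) * (q ^ i - q ^ (i+1)) := by
        rw [← Finset.sum_sub_distrib, Finset.mul_sum]
        refine Finset.sum_congr rfl (fun i _ => ?_)
        push_cast
        field_simp
        ring
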